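/- arXiv:0906.4987 — 3 statements merged into one kernel-verified Lean document; each statement's English description precedes it below -/
import Mathlib

section
/- Let X be a nonzero cochain complex of finite-dimensional left A-modules such that every component X^i is either zero or an indecomposable module, and such that for every l ∈ ℤ the differential d^l: X^l → X^{l+1} is zero if and only if X^j = 0 for all j > l, or X^j = 0 for all j ≤ l. Then X is indecomposable in the category of cochain complexes: whenever X is isomorphic to a direct sum of complexes Y ⊕ Z, then Y is isomorphic to the zero complex or Z is isomorphic to the zero complex. -/
open CategoryTheory CategoryTheory.Limits

/-- A module is indecomposable if it is nonzero and is not the (internal) direct sum of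
two nonzero submodules. -/
def IsIndecomposableModule (A : Type*) [Ring A] (M : Type*) [AddCommGroup M] [Module A M] :
    Prop :=
  Nontrivial M ∧ ∀ (N₁ N₂ : Submodule A M), IsCompl N₁ N₂ → N₁ = ⊥ ∨ N₂ = ⊥

lemma isZero_cx_of {A : Type} [Ring A] (Y : CochainComplex (ModuleCat A) ℤ)
    (h : ∀ i, IsZero (Y.X i)) : IsZero Y := by
  rw [IsZero.iff_id_eq_zero]
  apply HomologicalComplex.hom_ext
  intro i
  exact (h i).eq_of_src _ _

lemma aux_main {A : Type} [Ring A] (X Y Z : CochainComplex (ModuleCat A) ℤ)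
    (hcomp : ∀ i : ℤ, IsZero (X.X i) ∨ IsIndecomposableModule A (X.X i))
    (hd : ∀ l : ℤ, X.d l (l + 1) = 0 ↔
      ((∀ j : ℤ, l < j → IsZero (X.X j)) ∨ (∀ j : ℤ, j ≤ l → IsZero (X.X j))))
    (e : X ≅ Y ⊞ Z) (a b : ℤ) (hab : a ≤ b)
    (hYa : ¬ IsZero (Y.X a)) (hZb : ¬ IsZero (Z.X b)) : False := by
  set u : Y ⟶ X := biprod.inl ≫ e.inv with hu
  set v : Z ⟶ X := biprod.inr ≫ e.inv with hv
  set p : X ⟶ Y := e.hom ≫ biprod.fst with hp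
  set q : X ⟶ Z := e.hom ≫ biprod.snd with hq
  have hup : u ≫ p = 𝟙 Y := by simp [hu, hp]
  have hvq : v ≫ q = 𝟙 Z := by simp [hv, hq]
  have hvp : v ≫ p = 0 := by simp [hv, hp]
  have htotal : p ≫ u + q ≫ v = 𝟙 X := by
    rw [hp, hq, hu, hv]
    have key : e.hom ≫ ((biprod.fst ≫ biprod.inl) ≫ e.inv +
        (biprod.snd ≫ biprod.inr) ≫ e.inv) = 𝟙 X := by
      rw [← Preadditive.add_comp, biprod.total, Category.id_comp, e.hom_inv_id]
    rw [← key, Preadditive.comp_add]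
    simp only [Category.assoc]
  -- componentwise alternative
  have alt : ∀ i : ℤ, IsZero (Y.X i) ∨ IsZero (Z.X i) := by
    intro i
    have hupf : u.f i ≫ p.f i = 𝟙 (Y.X i) := by
      rw [← HomologicalComplex.comp_f, hup, HomologicalComplex.id_f]
    have hvqf : v.f i ≫ q.f i = 𝟙 (Z.X i) := by
      rw [← HomologicalComplex.comp_f, hvq, HomologicalComplex.id_f]
    have hvpf : v.f i ≫ p.f i = 0 := by
      rw [← HomologicalComplex.comp_f, hvp]; rfl
    have htotf : p.f i ≫ u.f i + q.f i ≫ v.f i = 𝟙 (X.X i) := by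
      have := congrArg (fun (f : X ⟶ X) => f.f i) htotal
      simpa using this
    rcases hcomp i with hz | hind
    · left
      rw [IsZero.iff_id_eq_zero, ← hupf, hz.eq_of_tgt (u.f i) 0, zero_comp]
    · have hcompl : IsCompl (LinearMap.range (u.f i).hom) (LinearMap.range (v.f i).hom) := by
        constructor
        · rw [Submodule.disjoint_def]
          rintro x ⟨y, rfl⟩ ⟨z, hz⟩
          have h1 : p.f i (u.f i y) = y := by
            have := congrArg (fun f => f y) hupf
            simpa using this
          have h2 : p.f i (v.f i z) = 0 := by
            have := congrArg (fun f => f z) hvpf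
            simpa using this
          rw [← hz] at h1
          rw [h2] at h1
          rw [← h1, map_zero]
        · rw [codisjoint_iff, eq_top_iff]
          intro x _
          have hx : u.f i (p.f i x) + v.f i (q.f i x) = x := by
            have := congrArg (fun f => f x) htotf
            simpa using this
          rw [← hx]
          exact Submodule.add_mem_sup (LinearMap.mem_range_self _ _) (LinearMap.mem_range_self _ _)
      rcases hind.2 (LinearMap.range (u.f i).hom) (LinearMap.range (v.f i).hom) hcompl with h1 | h2
      · left
        rw [IsZero.iff_id_eq_zero, ← hupf]
        have : u.f i = 0 := by
          apply ModuleCat.hom_ext; apply LinearMap.ext; intro x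
          have : u.f i x ∈ LinearMap.range (u.f i).hom := LinearMap.mem_range_self _ x
          rw [h1] at this
          simpa using this
        simp [this]
      · right
        rw [IsZero.iff_id_eq_zero, ← hvqf]
        have : v.f i = 0 := by
          apply ModuleCat.hom_ext; apply LinearMap.ext; intro x
          have : v.f i x ∈ LinearMap.range (v.f i).hom := LinearMap.mem_range_self _ x
          rw [h2] at this
          simpa using this
        simp [this]
  have hXa : ¬ IsZero (X.X a) := by
    intro hz
    apply hYa
    have hupf : u.f a ≫ p.f a = 𝟙 (Y.X a) := by
      rw [← HomologicalComplex.comp_f, hup, HomologicalComplex.id_f]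
    rw [IsZero.iff_id_eq_zero, ← hupf, hz.eq_of_tgt (u.f a) 0, zero_comp]
  have hXb : ¬ IsZero (X.X b) := by
    intro hz
    apply hZb
    have hvqf : v.f b ≫ q.f b = 𝟙 (Z.X b) := by
      rw [← HomologicalComplex.comp_f, hvq, HomologicalComplex.id_f]
    rw [IsZero.iff_id_eq_zero, ← hvqf, hz.eq_of_tgt (v.f b) 0, zero_comp]
  have dne : ∀ l : ℤ, a ≤ l → l < b → X.d l (l + 1) ≠ 0 := by
    intro l hal hlb h0
    rcases (hd l).mp h0 with h | h
    · exact hXb (h b hlb)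
    · exact hXa (h a hal)
  have prop : ∀ l : ℤ, a ≤ l → l < b → IsZero (Z.X l) → IsZero (Z.X (l + 1)) := by
    intro l hal hlb hZl
    rcases alt (l + 1) with hY1 | hZ1
    · exfalso
      apply dne l hal hlb
      have htotf : p.f l ≫ u.f l + q.f l ≫ v.f l = 𝟙 (X.X l) := by
        have := congrArg (fun (f : X ⟶ X) => f.f l) htotal
        simpa using this
      calc X.d l (l + 1) = 𝟙 (X.X l) ≫ X.d l (l + 1) := by simp
        _ = (p.f l ≫ u.f l + q.f l ≫ v.f l) ≫ X.d l (l + 1) := by rw [htotf]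
        _ = p.f l ≫ u.f l ≫ X.d l (l + 1) + q.f l ≫ v.f l ≫ X.d l (l + 1) := by
            simp [Preadditive.add_comp, Category.assoc]
        _ = p.f l ≫ (Y.d l (l + 1) ≫ u.f (l + 1)) + 0 := by
            rw [u.comm l (l + 1), hZl.eq_of_src (v.f l) 0, zero_comp, comp_zero]
        _ = 0 := by rw [hY1.eq_of_tgt (Y.d l (l + 1)) 0, zero_comp, comp_zero, add_zero]
    · exact hZ1
  have base : IsZero (Z.X a) := by
    rcases alt a with h | h
    · exact absurd h hYa
    · exact h
  have zall : ∀ n : ℕ, a + (n : ℤ) ≤ b → IsZero (Z.X (a + n)) := by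
    intro n
    induction n with
    | zero => intro _; simpa using base
    | succ m ih =>
      intro hm
      have h1 : a + (m : ℤ) ≤ b := by push_cast at hm ⊢; omega
      have h2 : a + (m : ℤ) < b := by push_cast at hm ⊢; omega
      have := prop (a + m) (by omega) h2 (ih h1)
      have heq : a + ((m : ℤ) + 1) = a + m + 1 := by ring
      push_cast
      rw [heq]
      exact this
  apply hZb
  have hn : a + ((b - a).toNat : ℤ) = b := by omega
  have := zall (b - a).toNat (by omega)
  rwa [hn] at this

lemma exists_nonzero_component {A : Type} [Ring A] (Y : CochainComplex (ModuleCat A) ℤ)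
    (h : ¬ IsZero Y) : ∃ i : ℤ, ¬ IsZero (Y.X i) := by
  by_contra hc
  push_neg at hc
  exact h (isZero_cx_of Y hc)

/-- Let `X` be a nonzero cochain complex of finite-dimensional left `A`-modules whose
components are all zero or indecomposable, and whose differential `d^l` vanishes exactly when
the complex vanishes in all degrees `> l` or in all degrees `≤ l`. Then `X` is indecomposable
in the category of cochain complexes. -/
theorem stmt2 {k A : Type} [Field k] [Ring A] [Algebra k A] [FiniteDimensional k A]
    (X : CochainComplex (ModuleCat A) ℤ)
    (hfd : ∀ i : ℤ, Module.Finite A (X.X i))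
    (hX : ¬ IsZero X)
    (hcomp : ∀ i : ℤ, IsZero (X.X i) ∨ IsIndecomposableModule A (X.X i))
    (hd : ∀ l : ℤ, X.d l (l + 1) = 0 ↔
      ((∀ j : ℤ, l < j → IsZero (X.X j)) ∨ (∀ j : ℤ, j ≤ l → IsZero (X.X j)))) :
    ∀ (Y Z : CochainComplex (ModuleCat A) ℤ), Nonempty (X ≅ Y ⊞ Z) →
      IsZero Y ∨ IsZero Z := by
  rintro Y Z ⟨e⟩
  by_contra hc
  push_neg at hc
  obtain ⟨hY, hZ⟩ := hc
  obtain ⟨a, ha⟩ := exists_nonzero_component Y hY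
  obtain ⟨b, hb⟩ := exists_nonzero_component Z hZ
  rcases le_total a b with hab | hab
  · exact aux_main X Y Z hcomp hd e a b hab ha hb
  · exact aux_main X Z Y hcomp hd (e ≪≫ biprod.braiding Y Z) b a hab hb ha
end

section
/- Let X be an object of Comp^{-,b}(P) that is not contractible, such that every component X^i is either zero or an indecomposable module, and such that for every l ∈ ℤ the differential d^l: X^l → X^{l+1} is zero if and only if X^j = 0 for all j > l, or X^j = 0 for all j ≤ l. Then X is indecomposable as an object of the homotopy category: whenever X is homotopy equivalent to a direct sum Y ⊕ Z of objects of Comp^{-,b}(P), then Y is contractible or Z is contractible. -/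
open CategoryTheory CategoryTheory.Limits

/-- `X` is an object of `Comp^{-,b}(𝒫)`: a cochain complex of finitely generated
(equivalently, finite-dimensional, as `A` is a finite-dimensional algebra) projective
`A`-modules which is bounded above and has bounded homology. -/
def IsCompMinusB {A : Type} [Ring A] (X : CochainComplex (ModuleCat A) ℤ) : Prop :=
  (∀ i : ℤ, Module.Finite A (X.X i)) ∧
  (∀ i : ℤ, Projective (X.X i)) ∧
  (∃ N : ℤ, ∀ i : ℤ, N ≤ i → IsZero (X.X i)) ∧
  (∃ a b : ℤ, ∀ i : ℤ, (i < a ∨ b < i) → IsZero (X.homology i))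

/-- A complex is contractible if its identity is null-homotopic. -/
def IsContractibleComplex {A : Type} [Ring A] (X : CochainComplex (ModuleCat A) ℤ) : Prop :=
  Nonempty (Homotopy (𝟙 X) 0)

/-- Fitting's dichotomy: an endomorphism of an indecomposable module that is both
Artinian and Noetherian is nilpotent or bijective. -/
theorem fitting_dichotomy {A M : Type*} [Ring A] [AddCommGroup M] [Module A M]
    [IsArtinian A M] [IsNoetherian A M] (hM : IsIndecomposableModule A M)
    (φ : M →ₗ[A] M) : IsNilpotent φ ∨ Function.Bijective φ := by
  obtain ⟨n, hn⟩ := Filter.eventually_atTop.mp φ.eventually_isCompl_ker_pow_range_pow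
  have h := hn (n + 1) (Nat.le_succ n)
  rcases hM.2 _ _ h with hker | hrange
  · right
    have hsur : Function.Surjective (φ ^ (n + 1)) := by
      have : LinearMap.range (φ ^ (n + 1)) = ⊤ := by
        have := h.codisjoint
        rwa [hker, codisjoint_iff, bot_sup_eq] at this
      exact LinearMap.range_eq_top.mp this
    have hinj : Function.Injective (φ ^ (n + 1)) := LinearMap.ker_eq_bot.mp hker
    constructor
    · have : (φ ^ (n + 1)) = φ ^ n * φ := by rw [pow_succ]
      have hinj' : Function.Injective ((φ ^ n) ∘ₗ φ) := by
        rwa [this, Module.End.mul_eq_comp] at hinj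
      exact Function.Injective.of_comp (f := φ ^ n) hinj'
    · have : (φ ^ (n + 1)) = φ * φ ^ n := by rw [pow_succ']
      have hsur' : Function.Surjective (φ ∘ₗ (φ ^ n)) := by
        rwa [this, Module.End.mul_eq_comp] at hsur
      exact Function.Surjective.of_comp (g := φ ^ n) hsur'
  · left
    exact ⟨n + 1, LinearMap.range_eq_bot.mp hrange⟩

section Plumbing

variable {A : Type} [Ring A]

theorem my_isArtinian (k : Type) [Field k] [Algebra k A] [FiniteDimensional k A]
    (M : Type*) [AddCommGroup M] [Module A M] [Module.Finite A M] :
    IsArtinian A M := by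
  have : IsArtinianRing A := IsArtinianRing.of_finite k A
  infer_instance

theorem my_isNoetherian (k : Type) [Field k] [Algebra k A] [FiniteDimensional k A]
    (M : Type*) [AddCommGroup M] [Module A M] [Module.Finite A M] :
    IsNoetherian A M := by
  have : IsNoetherianRing A := isNoetherian_of_tower k (inferInstance : IsNoetherian k A)
  infer_instance

end Plumbing

section ZeroMod

variable {A : Type} [Ring A]

theorem subsingleton_of_isZero {M : ModuleCat A} (h : IsZero M) : Subsingleton M := by
  have h1 : (𝟙 M : M ⟶ M) = 0 := h.eq_of_src _ _
  refine ⟨fun x y => ?_⟩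
  have hx : x = (𝟙 M : M ⟶ M) x := rfl
  have hy : y = (𝟙 M : M ⟶ M) y := rfl
  rw [hx, hy, h1]
  rfl

theorem bijective_of_isZero {M : ModuleCat A} (h : IsZero M) (φ : M ⟶ M) :
    Function.Bijective φ := by
  have := subsingleton_of_isZero h
  exact ⟨fun a b _ => Subsingleton.elim a b, fun x => ⟨x, Subsingleton.elim _ _⟩⟩

theorem nontrivial_of_indec {M : ModuleCat A} (h : IsIndecomposableModule A M) :
    Nontrivial M := h.1

end ZeroMod

section Prop1

variable {A : Type} [Ring A] {M N : Type*} [AddCommGroup M] [Module A M]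
  [AddCommGroup N] [Module A N]

theorem pow_comm_lem (d : M →ₗ[A] N) (a : Module.End A M) (b : Module.End A N)
    (hcomm : d ∘ₗ a = b ∘ₗ d) (n : ℕ) : d ∘ₗ (a ^ n) = (b ^ n) ∘ₗ d := by
  induction n with
  | zero => ext x; rfl
  | succ n ih =>
    rw [pow_succ, pow_succ']
    calc d ∘ₗ ((a ^ n) ∘ₗ a) = (d ∘ₗ (a ^ n)) ∘ₗ a := by rw [LinearMap.comp_assoc]
    _ = ((b ^ n) ∘ₗ d) ∘ₗ a := by rw [ih]
    _ = (b ^ n) ∘ₗ (d ∘ₗ a) := by rw [LinearMap.comp_assoc]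
    _ = (b ^ n) ∘ₗ (b ∘ₗ d) := by rw [hcomm]
    _ = (b ∘ₗ (b ^ n)) ∘ₗ d := by
        rw [← LinearMap.comp_assoc]
        congr 1
        ext x
        simp [Module.End.pow_apply, ← Function.iterate_succ_apply, Function.iterate_succ_apply']

theorem d_eq_zero_of_nil_bij (d : M →ₗ[A] N) (a : Module.End A M) (b : Module.End A N)
    (hcomm : d ∘ₗ a = b ∘ₗ d) (ha : IsNilpotent a) (hb : Function.Bijective b) :
    d = 0 := by
  obtain ⟨n, hn⟩ := ha
  have h := pow_comm_lem d a b hcomm n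
  rw [hn] at h
  have hbn : Function.Injective (b ^ n) := by
    have : Function.Bijective (b ^ n) := by
      rw [← Module.End.isUnit_iff] at hb ⊢
      exact hb.pow n
    exact this.1
  ext x
  have : (b ^ n) (d x) = (b ^ n) 0 := by
    have := congrArg (fun φ => φ x) h
    simpa using this.symm
  simpa using hbn this

theorem d_eq_zero_of_bij_nil (d : M →ₗ[A] N) (a : Module.End A M) (b : Module.End A N)
    (hcomm : d ∘ₗ a = b ∘ₗ d) (ha : Function.Bijective a) (hb : IsNilpotent b) :
    d = 0 := by
  obtain ⟨n, hn⟩ := hb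
  have h := pow_comm_lem d a b hcomm n
  rw [hn] at h
  have han : Function.Surjective (a ^ n) := by
    have : Function.Bijective (a ^ n) := by
      rw [← Module.End.isUnit_iff] at ha ⊢
      exact ha.pow n
    exact this.2
  ext x
  obtain ⟨y, hy⟩ := han x
  have := congrArg (fun φ => φ y) h
  simp only [LinearMap.comp_apply, LinearMap.zero_apply, LinearMap.zero_comp] at this
  rw [← hy]
  simpa using this

theorem not_bij_of_nilpotent {a : Module.End A M} [Nontrivial M] (ha : IsNilpotent a) :
    ¬ Function.Bijective a := by
  intro hb
  obtain ⟨n, hn⟩ := ha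
  have : Function.Bijective (a ^ n) := by
    rw [← Module.End.isUnit_iff] at hb ⊢
    exact hb.pow n
  rw [hn] at this
  obtain ⟨x, hx⟩ := exists_ne (0 : M)
  exact hx (this.1 (by simp))

end Prop1

section Cat

variable {A : Type} [Ring A]

theorem modcat_isIso_of_bijective {M N : ModuleCat A} (φ : M ⟶ N)
    (h : Function.Bijective φ) : IsIso φ := by
  let eqv := LinearEquiv.ofBijective φ.hom h
  exact ⟨ModuleCat.ofHom (eqv.symm : N →ₗ[A] M), by ext x; exact eqv.symm_apply_apply x,
    by ext x; exact eqv.apply_symm_apply x⟩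

/-- If `b ≫ a` is null-homotopic and `a ≫ b` is homotopic to the identity,
then `Y` is contractible. -/
theorem contractible_of_retract {X Y : CochainComplex (ModuleCat A) ℤ}
    (a : Y ⟶ X) (b : X ⟶ Y) (hab : Homotopy (a ≫ b) (𝟙 Y)) (hba : Homotopy (b ≫ a) 0) :
    Nonempty (Homotopy (𝟙 Y) 0) := by
  have h5 : Homotopy (𝟙 Y) ((a ≫ b) ≫ (a ≫ b)) :=
    (Homotopy.ofEq (Category.id_comp (𝟙 Y)).symm).trans (hab.symm.comp hab.symm)
  have h6 : (a ≫ b) ≫ (a ≫ b) = a ≫ ((b ≫ a) ≫ b) := by simp only [Category.assoc]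
  have h7 : Homotopy (a ≫ ((b ≫ a) ≫ b)) (a ≫ ((0 : X ⟶ X) ≫ b)) :=
    (hba.compRight b).compLeft a
  have h8 : a ≫ ((0 : X ⟶ X) ≫ b) = 0 := by simp
  exact ⟨h5.trans ((Homotopy.ofEq h6).trans (h7.trans (Homotopy.ofEq h8)))⟩

end Cat

/-- Reinterpret an endomorphism in `ModuleCat A` as a module endomorphism. -/
def endOf {A : Type} [Ring A] {M : ModuleCat A} (φ : M ⟶ M) : Module.End A M := φ.hom

/-- Let `X` be a non-contractible object of `Comp^{-,b}(𝒫)` whose components are all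
zero or indecomposable, and whose differential `d^l` vanishes exactly when the complex
vanishes in all degrees `> l` or in all degrees `≤ l`. Then `X` is indecomposable in the
homotopy category: whenever `X` is homotopy equivalent to a direct sum `Y ⊞ Z` of objects of
`Comp^{-,b}(𝒫)`, then `Y` or `Z` is contractible. -/
theorem stmt3 {k A : Type} [Field k] [Ring A] [Algebra k A] [FiniteDimensional k A]
    (X : CochainComplex (ModuleCat A) ℤ)
    (hXmb : IsCompMinusB X)
    (hXnc : ¬ IsContractibleComplex X)
    (hcomp : ∀ i : ℤ, IsZero (X.X i) ∨ IsIndecomposableModule A (X.X i))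
    (hd : ∀ l : ℤ, X.d l (l + 1) = 0 ↔
      ((∀ j : ℤ, l < j → IsZero (X.X j)) ∨ (∀ j : ℤ, j ≤ l → IsZero (X.X j)))) :
    ∀ (Y Z : CochainComplex (ModuleCat A) ℤ), IsCompMinusB Y → IsCompMinusB Z →
      Nonempty (HomotopyEquiv X (Y ⊞ Z)) →
      IsContractibleComplex Y ∨ IsContractibleComplex Z := by
  intro Y Z hY hZ ⟨e⟩
  -- the support of X is nonempty
  have hS : ∃ i : ℤ, ¬ IsZero (X.X i) := by
    by_contra h
    push_neg at h
    refine hXnc ⟨Homotopy.ofEq (HomologicalComplex.hom_ext _ _ fun i => (h i).eq_of_src _ _)⟩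
  -- the support is an interval
  have hnz_interval : ∀ i m j : ℤ, i ≤ m → m ≤ j →
      ¬ IsZero (X.X i) → ¬ IsZero (X.X j) → ¬ IsZero (X.X m) := by
    intro i m j him hmj hi hj hm
    rcases lt_or_eq_of_le hmj with hlt | heq
    · have hd0 : X.d m (m + 1) = 0 := hm.eq_of_src _ _
      rcases (hd m).mp hd0 with h1 | h2
      · exact hj (h1 j hlt)
      · exact hi (h2 i him)
    · exact hj (heq ▸ hm)
  -- differentials within the support are nonzero
  have hd_ne : ∀ i : ℤ, ¬ IsZero (X.X i) → ¬ IsZero (X.X (i + 1)) →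
      X.d i (i + 1) ≠ 0 := by
    intro i hi hi1 h0
    rcases (hd i).mp h0 with h1 | h2
    · exact hi1 (h1 (i + 1) (lt_add_one i))
    · exact hi (h2 i le_rfl)
  -- Fitting dichotomy at each nonzero component
  have hdich : ∀ i : ℤ, ¬ IsZero (X.X i) → ∀ u : Module.End A (X.X i),
      IsNilpotent u ∨ Function.Bijective u := by
    intro i hi u
    haveI : Module.Finite A (X.X i) := hXmb.1 i
    haveI : IsArtinian A (X.X i) := my_isArtinian (A := A) k _
    haveI : IsNoetherian A (X.X i) := my_isNoetherian (A := A) k _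
    exact fitting_dichotomy ((hcomp i).resolve_left hi) u
  -- propagation step
  have hstep : ∀ (u : X ⟶ X) (i : ℤ), ¬ IsZero (X.X i) → ¬ IsZero (X.X (i + 1)) →
      (Function.Bijective (u.f i) ↔ Function.Bijective (u.f (i + 1))) := by
    intro u i hi hi1
    have hcomm : (X.d i (i + 1)).hom ∘ₗ (u.f i).hom
        = endOf (u.f (i + 1)) ∘ₗ (X.d i (i + 1)).hom := congrArg ModuleCat.Hom.hom (u.comm i (i + 1))
    have hdne := hd_ne i hi hi1
    constructor
    · intro hbi
      rcases hdich (i + 1) hi1 (u.f (i + 1)).hom with hnil | hb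
      · have hd0' := d_eq_zero_of_bij_nil _ _ _ hcomm hbi hnil
        exact absurd (ModuleCat.hom_ext (LinearMap.ext (fun x => congrFun (congrArg DFunLike.coe hd0') x)) :
          X.d i (i + 1) = 0) hdne
      · exact hb
    · intro hbi1
      rcases hdich i hi (u.f i).hom with hnil | hb
      · have hd0' := d_eq_zero_of_nil_bij _ _ _ hcomm hnil hbi1
        exact absurd (ModuleCat.hom_ext (LinearMap.ext (fun x => congrFun (congrArg DFunLike.coe hd0') x)) :
          X.d i (i + 1) = 0) hdne
      · exact hb
  -- bijectivity propagates upward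
  have hup : ∀ (u : X ⟶ X) (i : ℤ), ¬ IsZero (X.X i) → Function.Bijective (u.f i) →
      ∀ j : ℤ, i ≤ j → ¬ IsZero (X.X j) → Function.Bijective (u.f j) := by
    intro u i hi hbi
    have H : ∀ j : ℤ, i ≤ j → (¬ IsZero (X.X j) → Function.Bijective (u.f j)) := by
      refine Int.le_induction ?_ ?_
      · intro _; exact hbi
      · intro j hij ih hj1
        have hjnz : ¬ IsZero (X.X j) := hnz_interval i j (j + 1) hij (by omega) hi hj1
        exact (hstep u j hjnz hj1).mp (ih hjnz)
    exact fun j hij hj => H j hij hj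
  -- bijectivity propagates downward
  have hdown : ∀ (u : X ⟶ X) (i : ℤ), ¬ IsZero (X.X i) → Function.Bijective (u.f i) →
      ∀ j : ℤ, j ≤ i → ¬ IsZero (X.X j) → Function.Bijective (u.f j) := by
    intro u i hi hbi
    have H : ∀ j : ℤ, j ≤ i → (¬ IsZero (X.X j) → Function.Bijective (u.f j)) := by
      refine Int.le_induction_down ?_ ?_
      · intro _; exact hbi
      · intro j hij ih hj1
        have hjnz : ¬ IsZero (X.X j) := hnz_interval (j - 1) j i (by omega) hij hj1 hi
        have e1 : j - 1 + 1 = j := by ring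
        have h2 := (hstep u (j - 1) hj1 (by rwa [e1])).mpr
        rw [e1] at h2
        exact h2 (ih hjnz)
    exact fun j hij hj => H j hij hj
  -- bijective somewhere on the support implies bijective everywhere
  have hall_bij : ∀ u : X ⟶ X,
      (∃ i : ℤ, ¬ IsZero (X.X i) ∧ Function.Bijective (u.f i)) →
      ∀ j : ℤ, Function.Bijective (u.f j) := by
    rintro u ⟨i, hi, hbi⟩ j
    by_cases hj : IsZero (X.X j)
    · exact bijective_of_isZero hj _
    · rcases le_total i j with h | h
      · exact hup u i hi hbi j h hj
      · exact hdown u i hi hbi j h hj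
  -- nilpotent somewhere on the support implies nilpotent on all of the support
  have hall_nil : ∀ u : X ⟶ X,
      (∃ i : ℤ, ¬ IsZero (X.X i) ∧ IsNilpotent (endOf (u.f i))) →
      ∀ j : ℤ, ¬ IsZero (X.X j) → IsNilpotent (endOf (u.f j)) := by
    rintro u ⟨i, hi, hni⟩ j hj
    rcases hdich j hj (u.f j).hom with hnil | hbij
    · exact hnil
    · exfalso
      have hbi := hall_bij u ⟨j, hj, hbij⟩ i
      haveI : Nontrivial (X.X i) := ((hcomp i).resolve_left hi).1
      exact not_bij_of_nilpotent hni hbi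
  -- pointwise bijective chain maps are isomorphisms
  have hiso : ∀ u : X ⟶ X, (∀ j : ℤ, Function.Bijective (u.f j)) → IsIso u := by
    intro u hu
    haveI : ∀ n : ℤ, IsIso (u.f n) := fun n => modcat_isIso_of_bijective _ (hu n)
    exact HomologicalComplex.Hom.isIso_of_components u
  -- (𝟙 X - u) is pointwise bijective whenever u is pointwise nilpotent on the support
  have hsub_bij : ∀ u : X ⟶ X,
      (∀ j : ℤ, ¬ IsZero (X.X j) → IsNilpotent (endOf (u.f j))) →
      ∀ j : ℤ, Function.Bijective ((𝟙 X - u).f j) := by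
    intro u hu j
    by_cases hj : IsZero (X.X j)
    · exact bijective_of_isZero hj _
    · have hcf : endOf ((𝟙 X - u).f j) = 1 - endOf (u.f j) := by
        rw [HomologicalComplex.sub_f_apply]
        ext x
        rfl
      have hb : Function.Bijective (endOf ((𝟙 X - u).f j)) := by
        rw [hcf]
        exact Module.End.isUnit_iff _ |>.mp (hu j hj).isUnit_one_sub
      exact hb
  -- the idempotent-up-to-homotopy associated with the decomposition
  set q : Y ⊞ Z ⟶ Y ⊞ Z := biprod.fst ≫ biprod.inl with hq
  set q' : Y ⊞ Z ⟶ Y ⊞ Z := biprod.snd ≫ biprod.inr with hq'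
  set f : X ⟶ X := e.hom ≫ q ≫ e.inv with hfdef
  set f' : X ⟶ X := e.hom ≫ q' ≫ e.inv with hf'def
  set g : X ⟶ X := 𝟙 X - f with hgdef
  have hff : Homotopy (f ≫ f) f := by
    have h1 : Homotopy ((e.hom ≫ q) ≫ ((e.inv ≫ e.hom) ≫ (q ≫ e.inv)))
        ((e.hom ≫ q) ≫ ((𝟙 (Y ⊞ Z)) ≫ (q ≫ e.inv))) :=
      (e.homotopyInvHomId.compRight (q ≫ e.inv)).compLeft (e.hom ≫ q)
    have e1 : f ≫ f = (e.hom ≫ q) ≫ ((e.inv ≫ e.hom) ≫ (q ≫ e.inv)) := by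
      simp only [hfdef, Category.assoc]
    have e2 : (e.hom ≫ q) ≫ ((𝟙 (Y ⊞ Z)) ≫ (q ≫ e.inv)) = f := by
      simp only [hfdef, hq, Category.id_comp, Category.assoc, biprod.inl_fst_assoc]
    exact (Homotopy.ofEq e1).trans (h1.trans (Homotopy.ofEq e2))
  have hf_sub : Homotopy (f - f ≫ f) 0 := Homotopy.equivSubZero hff.symm
  -- main case analysis
  obtain ⟨i₀, hi₀⟩ := hS
  rcases hdich i₀ hi₀ (f.f i₀).hom with hnil | hbij
  · -- f is pointwise nilpotent on the support : Y is contractible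
    left
    have hnilS := hall_nil f ⟨i₀, hi₀, hnil⟩
    haveI := hiso g (hsub_bij f hnilS)
    have hfg : f ≫ g = f - f ≫ f := by
      rw [hgdef, CategoryTheory.Preadditive.comp_sub, Category.comp_id]
    have hf0 : Homotopy f 0 := by
      have h2 : Homotopy ((f ≫ g) ≫ inv g) ((0 : X ⟶ X) ≫ inv g) :=
        (hfg ▸ hf_sub).compRight (inv g)
      exact (Homotopy.ofEq (by simp)).trans (h2.trans (Homotopy.ofEq (by simp)))
    have hba : (e.hom ≫ biprod.fst) ≫ (biprod.inl ≫ e.inv) = f := by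
      simp only [hfdef, hq, Category.assoc]
    have hab : Homotopy ((biprod.inl ≫ e.inv) ≫ (e.hom ≫ biprod.fst)) (𝟙 Y) := by
      have h3 : Homotopy (biprod.inl ≫ ((e.inv ≫ e.hom) ≫ biprod.fst))
          (biprod.inl ≫ ((𝟙 (Y ⊞ Z)) ≫ biprod.fst)) :=
        (e.homotopyInvHomId.compRight biprod.fst).compLeft biprod.inl
      refine (Homotopy.ofEq ?_).trans (h3.trans (Homotopy.ofEq ?_))
      · simp only [Category.assoc]
      · simp
    obtain ⟨h⟩ := contractible_of_retract (biprod.inl ≫ e.inv) (e.hom ≫ biprod.fst)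
      hab (hba ▸ hf0)
    exact ⟨h⟩
  · -- f is pointwise bijective
    have hfb := hall_bij f ⟨i₀, hi₀, hbij⟩
    rcases hdich i₀ hi₀ (g.f i₀).hom with hgnil | hgbij
    · -- g is pointwise nilpotent on the support : Z is contractible
      right
      have hgnilS := hall_nil g ⟨i₀, hi₀, hgnil⟩
      haveI := hiso f hfb
      have hgf2 : g ≫ f = f - f ≫ f := by
        rw [hgdef, CategoryTheory.Preadditive.sub_comp, Category.id_comp]
      have hg0 : Homotopy g 0 := by
        have h2 : Homotopy ((g ≫ f) ≫ inv f) ((0 : X ⟶ X) ≫ inv f) :=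
          (hgf2 ▸ hf_sub).compRight (inv f)
        exact (Homotopy.ofEq (by simp)).trans (h2.trans (Homotopy.ofEq (by simp)))
      -- f' is homotopic to g
      have hsum : f + f' = e.hom ≫ e.inv := by
        rw [hfdef, hf'def, ← CategoryTheory.Preadditive.comp_add,
          ← CategoryTheory.Preadditive.add_comp]
        rw [hq, hq', biprod.total, Category.id_comp]
      have h4 : Homotopy (f + f') (f + g) := by
        have hfg1 : f + g = 𝟙 X := by rw [hgdef]; abel
        exact (Homotopy.ofEq hsum).trans (e.homotopyHomInvId.trans (Homotopy.ofEq hfg1.symm))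
      have hf'g : Homotopy f' g := by
        have h5 : Homotopy ((f + f') - (f + g)) 0 := Homotopy.equivSubZero h4
        have e3 : (f + f') - (f + g) = f' - g := by abel
        exact Homotopy.equivSubZero.symm (e3 ▸ h5)
      have hf'0 : Homotopy f' 0 := hf'g.trans hg0
      have hba' : (e.hom ≫ biprod.snd) ≫ (biprod.inr ≫ e.inv) = f' := by
        simp only [hf'def, hq', Category.assoc]
      have hab' : Homotopy ((biprod.inr ≫ e.inv) ≫ (e.hom ≫ biprod.snd)) (𝟙 Z) := by
        have h3 : Homotopy (biprod.inr ≫ ((e.inv ≫ e.hom) ≫ biprod.snd))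
            (biprod.inr ≫ ((𝟙 (Y ⊞ Z)) ≫ biprod.snd)) :=
          (e.homotopyInvHomId.compRight biprod.snd).compLeft biprod.inr
        refine (Homotopy.ofEq ?_).trans (h3.trans (Homotopy.ofEq ?_))
        · simp only [Category.assoc]
        · simp
      obtain ⟨h⟩ := contractible_of_retract (biprod.inr ≫ e.inv) (e.hom ≫ biprod.snd)
        hab' (hba' ▸ hf'0)
      exact ⟨h⟩
    · -- both f and g are pointwise bijective : X would be contractible, contradiction
      exfalso
      have hgb := hall_bij g ⟨i₀, hi₀, hgbij⟩
      have hψb : ∀ j : ℤ, Function.Bijective ((f ≫ g).f j) := by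
        intro j
        rw [HomologicalComplex.comp_f]
        show Function.Bijective (⇑(g.f j) ∘ ⇑(f.f j))
        exact Function.Bijective.comp (hgb j) (hfb j)
      haveI := hiso (f ≫ g) hψb
      have hfg : f ≫ g = f - f ≫ f := by
        rw [hgdef, CategoryTheory.Preadditive.comp_sub, Category.comp_id]
      have hψ0 : Homotopy (f ≫ g) 0 := hfg ▸ hf_sub
      have hid : Homotopy (𝟙 X) 0 := by
        have h2 : Homotopy ((f ≫ g) ≫ inv (f ≫ g)) ((0 : X ⟶ X) ≫ inv (f ≫ g)) :=
          hψ0.compRight (inv (f ≫ g))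
        exact (Homotopy.ofEq (by simp)).trans (h2.trans (Homotopy.ofEq (by simp)))
      exact hXnc ⟨hid⟩
end

section
/- Let P1 and P2 be indecomposable projective A-modules and let d: P1 → P2 be an A-linear map. Then d is p-irreducible if and only if there exist a projective A-module P′ and a surjective A-linear map q: P1 × P′ → rad P2 with ker q ⊆ rad(P1 × P′) (i.e., q is a projective cover of rad P2) such that d = ι ∘ q ∘ inl, where ι: rad P2 → P2 is the inclusion and inl: P1 → P1 × P′ is the canonical inclusion; in other words, d is p-irreducible if and only if P1 is a direct summand of the projective cover of rad P2 and d is induced by this cover. -/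
/-- The radical of a module: the intersection of all its maximal (proper) submodules. -/
def moduleRadical (A : Type*) [Ring A] (M : Type*) [AddCommGroup M] [Module A M] :
    Submodule A M :=
  sInf {m : Submodule A M | IsCoatom m}

/-- A linear map `d : M → N` between (finite-dimensional) projective modules is
`p`-irreducible if it is neither a section nor a retraction, and whenever `d = f₂ ∘ f₁`
with `f₁ : M → P`, `f₂ : P → N` for a (finite-dimensional) projective module `P`, then
`f₁` is a section or `f₂` is a retraction. -/
def IsPIrreducibleLM {A : Type} [Ring A] {M N : Type} [AddCommGroup M] [Module A M]
    [AddCommGroup N] [Module A N] (d : M →ₗ[A] N) : Prop :=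
  (¬ ∃ g : N →ₗ[A] M, g ∘ₗ d = LinearMap.id) ∧
  (¬ ∃ g : N →ₗ[A] M, d ∘ₗ g = LinearMap.id) ∧
  ∀ (P : Type) [AddCommGroup P] [Module A P], Module.Finite A P → Module.Projective A P →
    ∀ (f₁ : M →ₗ[A] P) (f₂ : P →ₗ[A] N), f₂ ∘ₗ f₁ = d →
      (∃ g : P →ₗ[A] M, g ∘ₗ f₁ = LinearMap.id) ∨ (∃ g : N →ₗ[A] P, f₂ ∘ₗ g = LinearMap.id)


open Function LinearMap

section Auxiliary

lemma finLen {k A : Type} [Field k] [Ring A] [Algebra k A] [FiniteDimensional k A]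
    (M : Type) [AddCommGroup M] [Module A M] [Module.Finite A M] :
    IsNoetherian A M ∧ IsArtinian A M := by
  letI : Module k M := Module.compHom M (algebraMap k A)
  haveI : IsScalarTower k A M := ⟨fun c a x => by
    show (c • a) • x = algebraMap k A c • (a • x)
    rw [Algebra.smul_def, mul_smul]⟩
  haveI : Module.Finite k M := Module.Finite.trans A M
  exact ⟨isNoetherian_of_tower k inferInstance, isArtinian_of_tower k inferInstance⟩

variable {A : Type} [Ring A] {M : Type} [AddCommGroup M] [Module A M]

lemma coatomic [IsNoetherian A M] : IsCoatomic (Submodule A M) :=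
  isCoatomic_of_orderTop_gt_wellFounded (IsNoetherian.wf inferInstance)

lemma rad_le_coatom {m : Submodule A M} (h : IsCoatom m) : moduleRadical A M ≤ m := sInf_le h

lemma nakayama [IsNoetherian A M] {N : Submodule A M}
    (h : N ⊔ moduleRadical A M = ⊤) : N = ⊤ := by
  by_contra hne
  obtain (h0 | ⟨m, hm, hle⟩) := (coatomic (A := A) (M := M)).eq_top_or_exists_le_coatom N
  · exact hne h0
  · exact hm.1 (top_le_iff.mp (h ▸ sup_le hle (rad_le_coatom hm)))

lemma rad_lt_top [IsNoetherian A M] [Nontrivial M] : moduleRadical A M < ⊤ := by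
  rcases eq_or_lt_of_le (le_top (a := moduleRadical A M)) with h | h
  · have : (⊥ : Submodule A M) = ⊤ := nakayama (by rw [h, sup_top_eq])
    exact absurd this bot_ne_top
  · exact h

lemma surj_of_range_sup_rad [IsNoetherian A M] {f : M →ₗ[A] M}
    (h : range f ⊔ moduleRadical A M = ⊤) : Surjective f :=
  range_eq_top.mp (nakayama h)

lemma bij_of_one_sub_rad [IsNoetherian A M] {f : M →ₗ[A] M}
    (h : ∀ x, x - f x ∈ moduleRadical A M) : Function.Bijective f := by
  have hs : Surjective f := by
    apply surj_of_range_sup_rad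
    rw [eq_top_iff]
    intro x _
    exact Submodule.mem_sup.mpr ⟨f x, mem_range_self f x, x - f x, h x, by abel⟩
  exact ⟨IsNoetherian.injective_of_surjective_endomorphism f hs, hs⟩

lemma fitting_alt [IsNoetherian A M] [IsArtinian A M]
    (hind : IsIndecomposableModule A M) (g : M →ₗ[A] M) :
    Surjective g ∨ Surjective (LinearMap.id (R := A) (M := M) - g) := by
  obtain ⟨n, hn⟩ := Filter.eventually_atTop.mp (g.eventually_isCompl_ker_pow_range_pow)
  have h := hn (n + 1) (Nat.le_succ n)
  rcases hind.2 _ _ h with hk | hr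
  · left
    have htop : range (g ^ (n+1)) = ⊤ := by
      have := h.codisjoint
      rw [hk, codisjoint_iff, bot_sup_eq] at this
      exact this
    have : range (g ^ (n+1)) ≤ range g := by
      rw [pow_succ']
      exact range_comp_le_range _ _
    exact range_eq_top.mp (top_le_iff.mp (htop ▸ this))
  · right
    have hz : g ^ (n + 1) = 0 := by
      rw [← range_eq_bot]; exact hr
    have hgeo : (1 - g) * (∑ i ∈ Finset.range (n+1), g ^ i) = 1 := by
      have := mul_geom_sum (x := g) (n := n + 1)
      have h2 : (1 - g) * (∑ i ∈ Finset.range (n+1), g ^ i)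
          = -((g - 1) * (∑ i ∈ Finset.range (n+1), g ^ i)) := by
        rw [← neg_mul, neg_sub]
      rw [h2, this, hz, zero_sub, neg_neg]
    intro y
    exact ⟨(∑ i ∈ Finset.range (n+1), g ^ i) y, by
      have := congrArg (fun f : Module.End A M => f y) hgeo
      simpa [Module.End.mul_apply] using this⟩

lemma coatom_unique [IsNoetherian A M] [IsArtinian A M]
    (hind : IsIndecomposableModule A M) (hproj : Module.Projective A M)
    {m₁ m₂ : Submodule A M} (h₁ : IsCoatom m₁) (h₂ : IsCoatom m₂) : m₁ = m₂ := by
  by_contra hne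
  have hsup : m₁ ⊔ m₂ = ⊤ := by
    apply h₁.2
    rcases lt_or_eq_of_le (le_sup_left : m₁ ≤ m₁ ⊔ m₂) with h | h
    · exact h
    · exfalso
      have h21 : m₂ ≤ m₁ := h ▸ le_sup_right
      rcases lt_or_eq_of_le h21 with h' | h'
      · exact h₁.1 (h₂.2 _ h')
      · exact hne h'.symm
  have hφ : Surjective (m₁.mkQ ∘ₗ m₂.subtype) := by
    rw [← range_eq_top, range_comp, Submodule.range_subtype, Submodule.map_mkQ_eq_top]
    exact hsup
  obtain ⟨f, hf⟩ := Module.projective_lifting_property (m₁.mkQ ∘ₗ m₂.subtype) m₁.mkQ hφ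
  set g : M →ₗ[A] M := m₂.subtype ∘ₗ f with hg
  have hrg : range g ≤ m₂ := by
    rw [hg, range_comp]
    exact (Submodule.map_subtype_le _ _).trans_eq (by simp [Submodule.range_subtype])
  have hr1g : range (LinearMap.id (R := A) (M := M) - g) ≤ m₁ := by
    rintro x ⟨y, rfl⟩
    have hmk : m₁.mkQ (g y) = m₁.mkQ y := by
      have := congrArg (fun h : M →ₗ[A] M ⧸ m₁ => h y) hf
      simpa [hg] using this
    have : m₁.mkQ ((LinearMap.id (R := A) (M := M) - g) y) = 0 := by
      have : m₁.mkQ (y - g y) = m₁.mkQ y - m₁.mkQ (g y) := map_sub _ _ _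
      simp [LinearMap.sub_apply, this, hmk]
    rwa [← Submodule.Quotient.mk_eq_zero m₁]
  rcases fitting_alt hind g with hs | hs
  · exact h₂.1 (top_le_iff.mp (range_eq_top.mpr hs ▸ hrg))
  · exact h₁.1 (top_le_iff.mp (range_eq_top.mpr hs ▸ hr1g))

lemma le_rad_of_ne_top [IsNoetherian A M] [IsArtinian A M]
    (hind : IsIndecomposableModule A M) (hproj : Module.Projective A M)
    {N : Submodule A M} (hN : N ≠ ⊤) : N ≤ moduleRadical A M := by
  obtain (h0 | ⟨m, hm, hle⟩) := (coatomic (A := A) (M := M)).eq_top_or_exists_le_coatom N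
  · exact absurd h0 hN
  · exact le_sInf fun m' hm' => (coatom_unique hind hproj hm hm') ▸ hle

lemma rad_map {N : Type} [AddCommGroup N] [Module A N] (e : M ≃ₗ[A] N) :
    (moduleRadical A M).map (e : M →ₗ[A] N) = moduleRadical A N := by
  let o : Submodule A M ≃o Submodule A N := Submodule.orderIsoMapComap e
  have ho : ∀ p : Submodule A M, o p = p.map (e : M →ₗ[A] N) := fun p => rfl
  have h1 : o (moduleRadical A M) = sInf (o '' {m | IsCoatom m}) := by
    rw [moduleRadical, o.map_sInf, sInf_image]
  have h2 : o '' {m : Submodule A M | IsCoatom m} = {m : Submodule A N | IsCoatom m} := by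
    ext n
    constructor
    · rintro ⟨m, hm, rfl⟩
      exact (o.isCoatom_iff m).mpr hm
    · intro hn
      exact ⟨o.symm n, (o.symm.isCoatom_iff n).mpr hn, o.apply_symm_apply n⟩
  rw [← ho, h1, h2]
  rfl

end Auxiliary

section Cover

noncomputable def krank (k A : Type) [Field k] [Ring A] [Algebra k A]
    (Q : Type) [AddCommGroup Q] [Module A Q] : ℕ :=
  letI : Module k Q := Module.compHom Q (algebraMap k A)
  Module.finrank k Q

lemma krank_lt {k A : Type} [Field k] [Ring A] [Algebra k A] [FiniteDimensional k A]
    {Q : Type} [AddCommGroup Q] [Module A Q] [Module.Finite A Q]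
    (N : Submodule A Q) (hN : N ≠ ⊤) : krank k A ↥N < krank k A Q := by
  letI : Module k Q := Module.compHom Q (algebraMap k A)
  haveI : IsScalarTower k A Q := ⟨fun c a x => by
    show (c • a) • x = algebraMap k A c • (a • x)
    rw [Algebra.smul_def, mul_smul]⟩
  haveI : Module.Finite k Q := Module.Finite.trans A Q
  letI : Module k ↥N := Module.compHom ↥N (algebraMap k A)
  let j : ↥N →ₗ[k] Q :=
    { toFun := Subtype.val
      map_add' := fun x y => rfl
      map_smul' := fun c x => rfl }
  have hinj : Injective j := Subtype.val_injective
  have h1 : krank k A ↥N = Module.finrank k (LinearMap.range j) :=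
    (LinearMap.finrank_range_of_inj hinj).symm
  have h2 : LinearMap.range j < ⊤ := by
    rcases lt_or_eq_of_le (le_top (a := LinearMap.range j)) with h | h
    · exact h
    · exfalso
      apply hN
      rw [eq_top_iff]
      intro x _
      have : x ∈ LinearMap.range j := h ▸ Submodule.mem_top
      obtain ⟨y, rfl⟩ := this
      exact y.2
  have := Submodule.finrank_lt (K := k) (V := Q) h2.ne
  exact h1 ▸ this

lemma cover_step {k A : Type} [Field k] [Ring A] [Algebra k A] [FiniteDimensional k A]
    (M : Type) [AddCommGroup M] [Module A M]
    (Q : Type) [AddCommGroup Q] [Module A Q] [Module.Finite A Q]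
    (hproj : Module.Projective A Q) (p : Q →ₗ[A] M) (hsurj : Surjective p)
    (hker : ¬ ker p ≤ moduleRadical A Q) :
    ∃ (N : Submodule A Q), N ≠ ⊤ ∧ Module.Finite A ↥N ∧ Module.Projective A ↥N ∧
      Surjective (p ∘ₗ N.subtype) := by
  haveI := (finLen (k := k) (A := A) Q).1
  haveI := (finLen (k := k) (A := A) Q).2
  have : ¬ ∀ m ∈ {m : Submodule A Q | IsCoatom m}, ker p ≤ m := fun h => hker (le_sInf h)
  push_neg at this
  obtain ⟨m, hm, hkerm⟩ := this
  have hsup : ker p ⊔ m = ⊤ := by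
    rw [sup_comm]
    exact hm.2 _ (lt_of_le_of_ne le_sup_left (fun h => hkerm (sup_eq_left.mp h.symm)))
  have hφ : Surjective (p ∘ₗ m.subtype) := by
    intro x
    obtain ⟨y, rfl⟩ := hsurj x
    have : y ∈ ker p ⊔ m := hsup ▸ Submodule.mem_top
    obtain ⟨a, ha, b, hb, rfl⟩ := Submodule.mem_sup.mp this
    exact ⟨⟨b, hb⟩, by simp [mem_ker.mp ha]⟩
  obtain ⟨f, hf⟩ := Module.projective_lifting_property (R := A) (p ∘ₗ m.subtype) p hφ
  set g : Q →ₗ[A] Q := m.subtype ∘ₗ f with hg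
  have hpg : p ∘ₗ g = p := by
    rw [hg, ← LinearMap.comp_assoc]; exact hf
  have hpgn : ∀ (j : ℕ) (x : Q), p ((g ^ j) x) = p x := by
    intro j
    induction j with
    | zero => intro x; simp
    | succ j ih =>
      intro x
      rw [pow_succ]
      have : (g ^ j * g) x = (g ^ j) (g x) := rfl
      rw [this, ih (g x)]
      exact congrArg (fun h : Q →ₗ[A] M => h x) hpg
  have hrg : range g ≤ m := by
    rintro x ⟨y, rfl⟩
    exact (f y).2
  obtain ⟨n, hn⟩ := Filter.eventually_atTop.mp (g.eventually_isCompl_ker_pow_range_pow)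
  have hcompl := hn (n + 1) (Nat.le_succ n)
  set N : Submodule A Q := range (g ^ (n + 1)) with hN
  have hNle : N ≤ m := by
    rintro x ⟨y, rfl⟩
    rw [pow_succ']
    exact hrg ⟨(g ^ n) y, rfl⟩
  refine ⟨N, fun h => hm.1 (top_le_iff.mp (h ▸ hNle)), ?_, ?_, ?_⟩
  · exact Module.Finite.iff_fg.mpr (IsNoetherian.noetherian N)
  · exact Module.Projective.of_split N.subtype
      (N.linearProjOfIsCompl _ hcompl.symm)
      (by ext x; exact congrArg Subtype.val (Submodule.projectionOnto_apply_left _ x))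
  · intro x
    obtain ⟨y, rfl⟩ := hsurj x
    exact ⟨⟨(g ^ (n + 1)) y, ⟨y, rfl⟩⟩, by simpa using hpgn (n + 1) y⟩

lemma cover_aux {k A : Type} [Field k] [Ring A] [Algebra k A] [FiniteDimensional k A]
    (M : Type) [AddCommGroup M] [Module A M] :
    ∀ (n : ℕ) (Q : Type) (iG : AddCommGroup Q) (iM : @Module A Q _ iG.toAddCommMonoid),
      Module.Finite A Q → Module.Projective A Q → ∀ p : Q →ₗ[A] M, Surjective p →
      krank k A Q ≤ n →
      ∃ (Q' : Type) (_ : AddCommGroup Q') (_ : Module A Q'),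
        Module.Finite A Q' ∧ Module.Projective A Q' ∧
        ∃ c : Q' →ₗ[A] M, Surjective c ∧ ker c ≤ moduleRadical A Q' := by
  intro n
  induction n with
  | zero =>
    intro Q iG iM hfin hproj p hsurj hrank
    by_cases hk : ker p ≤ moduleRadical A Q
    · exact ⟨Q, iG, iM, hfin, hproj, p, hsurj, hk⟩
    · obtain ⟨N, hNne, hNfin, hNproj, hNsurj⟩ := cover_step (k := k) M Q hproj p hsurj hk
      have := krank_lt (k := k) N hNne
      omega
  | succ n ih =>
    intro Q iG iM hfin hproj p hsurj hrank
    by_cases hk : ker p ≤ moduleRadical A Q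
    · exact ⟨Q, iG, iM, hfin, hproj, p, hsurj, hk⟩
    · obtain ⟨N, hNne, hNfin, hNproj, hNsurj⟩ := cover_step (k := k) M Q hproj p hsurj hk
      have hlt := krank_lt (k := k) N hNne
      exact ih ↥N _ _ hNfin hNproj (p ∘ₗ N.subtype) hNsurj (by omega)

lemma exists_cover {k A : Type} [Field k] [Ring A] [Algebra k A] [FiniteDimensional k A]
    (M : Type) [AddCommGroup M] [Module A M] [Module.Finite A M] :
    ∃ (Q' : Type) (_ : AddCommGroup Q') (_ : Module A Q'),
        Module.Finite A Q' ∧ Module.Projective A Q' ∧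
        ∃ c : Q' →ₗ[A] M, Surjective c ∧ ker c ≤ moduleRadical A Q' := by
  obtain ⟨n, f, hf⟩ := Module.Finite.exists_fin' A M
  exact cover_aux (k := k) M (krank k A (Fin n → A)) (Fin n → A) _ _
    inferInstance inferInstance f hf le_rfl

end Cover


/-- A map `d : P₁ → P₂` between indecomposable (finite-dimensional) projective `A`-modules
is `p`-irreducible if and only if `P₁` is a direct summand of the projective cover of
`rad P₂` and `d` is induced by this cover. -/
theorem stmt7 {k A : Type} [Field k] [Ring A] [Algebra k A] [FiniteDimensional k A]
    (P₁ P₂ : Type) [AddCommGroup P₁] [Module A P₁] [AddCommGroup P₂] [Module A P₂]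
    [Module.Finite A P₁] [Module.Finite A P₂]
    (h₁proj : Module.Projective A P₁) (h₂proj : Module.Projective A P₂)
    (h₁indec : IsIndecomposableModule A P₁) (h₂indec : IsIndecomposableModule A P₂)
    (d : P₁ →ₗ[A] P₂) :
    IsPIrreducibleLM d ↔
      ∃ (P' : Type) (_ : AddCommGroup P') (_ : Module A P'),
        Module.Finite A P' ∧ Module.Projective A P' ∧
        ∃ q : (P₁ × P') →ₗ[A] moduleRadical A P₂,
          Function.Surjective q ∧
          LinearMap.ker q ≤ moduleRadical A (P₁ × P') ∧
          d = (moduleRadical A P₂).subtype ∘ₗ q ∘ₗ LinearMap.inl A P₁ P' := by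
  haveI := h₁proj
  haveI := h₂proj
  haveI : Nontrivial P₁ := h₁indec.1
  haveI : Nontrivial P₂ := h₂indec.1
  haveI := (finLen (k := k) (A := A) P₁).1
  haveI := (finLen (k := k) (A := A) P₁).2
  haveI := (finLen (k := k) (A := A) P₂).1
  haveI := (finLen (k := k) (A := A) P₂).2
  have hradlt : moduleRadical A P₂ < ⊤ := rad_lt_top
  constructor
  · rintro ⟨hs, hr, hfac⟩
    -- d is not surjective
    have hdns : ¬ Surjective d := by
      intro h
      obtain ⟨g, hg⟩ := Module.projective_lifting_property d LinearMap.id h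
      exact hr ⟨g, hg⟩
    have hrle : range d ≤ moduleRadical A P₂ :=
      le_rad_of_ne_top h₂indec h₂proj (fun h => hdns (range_eq_top.mp h))
    set d' : P₁ →ₗ[A] ↥(moduleRadical A P₂) :=
      codRestrict (moduleRadical A P₂) d (fun x => hrle (mem_range_self d x)) with hd'
    haveI : Module.Finite A ↥(moduleRadical A P₂) :=
      Module.Finite.iff_fg.mpr (IsNoetherian.noetherian _)
    obtain ⟨Q, iQa, iQm, hQfin, hQproj, c, hcs, hck⟩ :=
      exists_cover (k := k) (A := A) ↥(moduleRadical A P₂)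
    haveI := hQfin
    haveI := hQproj
    haveI := (finLen (k := k) (A := A) Q).1
    obtain ⟨f₁, hf₁⟩ := Module.projective_lifting_property c d' hcs
    have hfac2 : ((moduleRadical A P₂).subtype ∘ₗ c) ∘ₗ f₁ = d := by
      rw [LinearMap.comp_assoc, hf₁]
      ext x
      rfl
    rcases hfac Q hQfin hQproj f₁ ((moduleRadical A P₂).subtype ∘ₗ c) hfac2 with
      ⟨r, hrf⟩ | ⟨g, hg⟩
    · -- f₁ is a section, build the decomposition
      have hinj : Injective f₁ := by
        intro x y h
        have hx := congrArg (fun t : P₁ →ₗ[A] P₁ => t x) hrf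
        have hy := congrArg (fun t : P₁ →ₗ[A] P₁ => t y) hrf
        simp only [LinearMap.coe_comp, Function.comp_apply, id_apply] at hx hy
        rw [← hx, ← hy, h]
      have hri : ∀ x : P₁, r (f₁ x) = x := by
        intro x
        have := congrArg (fun t : P₁ →ₗ[A] P₁ => t x) hrf
        simpa using this
      have hcompl : IsCompl (range f₁) (ker r) := by
        constructor
        · rw [disjoint_iff]
          rw [eq_bot_iff]
          rintro x ⟨⟨y, rfl⟩, hxk⟩
          have : y = 0 := by rw [← hri y]; exact hxk
          simp [this]
        · rw [codisjoint_iff, eq_top_iff]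
          intro x _
          refine Submodule.mem_sup.mpr ⟨f₁ (r x), mem_range_self _ _, x - f₁ (r x), ?_, by abel⟩
          simp [mem_ker, map_sub, hri]
      set N := ker r with hNdef
      let E : (P₁ × ↥N) ≃ₗ[A] Q :=
        ((LinearEquiv.ofInjective f₁ hinj).prodCongr
          (LinearEquiv.refl A ↥N)).trans (Submodule.prodEquivOfIsCompl _ _ hcompl)
      have hE : ∀ (x : P₁) (y : ↥N), E (x, y) = f₁ x + y.val := by
        intro x y
        have h0 : E (x, y) = (Submodule.prodEquivOfIsCompl _ _ hcompl)
            ((LinearEquiv.ofInjective f₁ hinj) x, y) := rfl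
        rw [h0, Submodule.coe_prodEquivOfIsCompl']
        simp [LinearEquiv.ofInjective_apply]
      haveI : Module.Finite A ↥N := Module.Finite.iff_fg.mpr (IsNoetherian.noetherian _)
      haveI : Module.Projective A ↥N :=
        Module.Projective.of_split N.subtype (N.linearProjOfIsCompl _ hcompl.symm)
          (by ext x; exact congrArg Subtype.val (Submodule.projectionOnto_apply_left _ x))
      refine ⟨↥N, inferInstance, inferInstance, inferInstance, inferInstance,
        c ∘ₗ (E : (P₁ × ↥N) →ₗ[A] Q), hcs.comp E.surjective, ?_, ?_⟩
      · intro x hx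
        have hERad : (E x : Q) ∈ moduleRadical A Q := by
          apply hck
          simpa using hx
        have : x ∈ (moduleRadical A Q).map (E.symm : Q →ₗ[A] (P₁ × ↥N)) :=
          ⟨E x, hERad, E.symm_apply_apply x⟩
        rwa [rad_map E.symm] at this
      · ext x
        have h1 : E (x, (0 : ↥N)) = f₁ x := by rw [hE]; simp
        have h2 : c (f₁ x) = d' x := congrArg (fun t : P₁ →ₗ[A] ↥(moduleRadical A P₂) => t x) hf₁
        simp only [LinearMap.coe_comp, Function.comp_apply, inl_apply, LinearEquiv.coe_coe]
        rw [h1, h2]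
        rfl
    · -- f₂ can't be a retraction
      exfalso
      have : range ((moduleRadical A P₂).subtype ∘ₗ c) = ⊤ := by
        rw [eq_top_iff]
        intro x _
        exact ⟨g x, congrArg (fun t : P₂ →ₗ[A] P₂ => t x) hg⟩
      have hle : range ((moduleRadical A P₂).subtype ∘ₗ c) ≤ moduleRadical A P₂ := by
        rw [range_comp]
        exact (Submodule.map_subtype_le _ _).trans_eq (by simp [Submodule.range_subtype])
      rw [this] at hle
      exact absurd (top_le_iff.mp hle) (ne_of_lt hradlt)
  · rintro ⟨P', iP'a, iP'm, hP'fin, hP'proj, q, hqs, hqk, hdq⟩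
    haveI := hP'fin
    haveI := hP'proj
    haveI := (finLen (k := k) (A := A) (P₁ × P')).1
    have hd_le : range d ≤ moduleRadical A P₂ := by
      rintro x ⟨y, rfl⟩
      rw [hdq]
      exact (q (LinearMap.inl A P₁ P' y)).2
    have hdns : ¬ Surjective d := by
      intro h
      exact absurd (top_le_iff.mp (range_eq_top.mpr h ▸ hd_le)) (ne_of_lt hradlt)
    refine ⟨?_, ?_, ?_⟩
    · -- not a section
      rintro ⟨g, hg⟩
      set e : P₂ →ₗ[A] P₂ := d ∘ₗ g with he
      have hgd : ∀ x : P₁, g (d x) = x := by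
        intro x
        have := congrArg (fun t : P₁ →ₗ[A] P₁ => t x) hg
        simpa using this
      have hee : ∀ x : P₂, e (e x) = e x := by
        intro x
        simp [he, hgd]
      have hcompl : IsCompl (ker e) (range e) := by
        constructor
        · rw [disjoint_iff, eq_bot_iff]
          rintro x ⟨hxk, ⟨y, rfl⟩⟩
          have : e (e y) = 0 := hxk
          rwa [hee y] at this
        · rw [codisjoint_iff, eq_top_iff]
          intro x _
          refine Submodule.mem_sup.mpr ⟨x - e x, ?_, e x, mem_range_self _ _, by abel⟩
          simp [mem_ker, map_sub, hee]
      rcases h₂indec.2 _ _ hcompl with hk | hrr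
      · -- ker e = ⊥ : then range e = ⊤, contradiction with range e ≤ rad
        have htop : range e = ⊤ := by
          have := hcompl.codisjoint
          rwa [hk, codisjoint_iff, bot_sup_eq] at this
        have hle : range e ≤ moduleRadical A P₂ := by
          rintro x ⟨y, rfl⟩
          exact hd_le (mem_range_self d (g y))
        rw [htop] at hle
        exact absurd (top_le_iff.mp hle) (ne_of_lt hradlt)
      · -- range e = ⊥ : then d = 0, so P₁ trivial, contradiction
        have hd0 : ∀ x : P₁, d x = 0 := by
          intro x
          have : e (d x) ∈ range e := mem_range_self _ _
          rw [hrr] at this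
          have h0 : e (d x) = 0 := this
          have : e (d x) = d x := by simp [he, hgd]
          rwa [this] at h0
        obtain ⟨x, y, hxy⟩ := exists_pair_ne P₁
        apply hxy
        rw [← hgd x, ← hgd y, hd0 x, hd0 y]
    · -- not a retraction
      rintro ⟨g, hg⟩
      apply hdns
      intro x
      exact ⟨g x, congrArg (fun t : P₂ →ₗ[A] P₂ => t x) hg⟩
    · -- factorization property
      intro P iPa iPm hPfin hPproj f₁ f₂ hf
      haveI := hPfin
      haveI := hPproj
      haveI := (finLen (k := k) (A := A) P).1
      haveI := (finLen (k := k) (A := A) P).2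
      by_cases hsurj : Surjective f₂
      · right
        obtain ⟨g, hg⟩ := Module.projective_lifting_property f₂ LinearMap.id hsurj
        exact ⟨g, hg⟩
      · left
        have hle : range f₂ ≤ moduleRadical A P₂ :=
          le_rad_of_ne_top h₂indec h₂proj (fun h => hsurj (range_eq_top.mp h))
        set f₂' : P →ₗ[A] ↥(moduleRadical A P₂) :=
          codRestrict (moduleRadical A P₂) f₂ (fun x => hle (mem_range_self f₂ x)) with hf₂'
        set h' : (P × P') →ₗ[A] ↥(moduleRadical A P₂) :=
          f₂'.coprod (q ∘ₗ LinearMap.inr A P₁ P') with hh'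
        set w : (P₁ × P') →ₗ[A] (P × P') := prodMap f₁ LinearMap.id with hw
        have hhw : h' ∘ₗ w = q := by
          apply LinearMap.ext
          rintro ⟨x, y⟩
          have hq : q (x, y) = q (x, 0) + q (0, y) := by
            rw [← map_add]
            congr 1
            simp
          show h' (f₁ x, y) = q (x, y)
          rw [hq]
          have : h' (f₁ x, y) = f₂' (f₁ x) + q (0, y) := by
            simp [hh', coprod_apply]
          rw [this]
          congr 1
          apply Subtype.ext
          show f₂ (f₁ x) = ((q (x, 0)) : P₂)
          have hdx : f₂ (f₁ x) = d x := congrArg (fun t : P₁ →ₗ[A] P₂ => t x) hf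
          rw [hdx, hdq]
          rfl
        obtain ⟨u, hu⟩ := Module.projective_lifting_property q h' hqs
        set v : (P₁ × P') →ₗ[A] (P₁ × P') := u ∘ₗ w with hv
        have hqv : q ∘ₗ v = q := by
          rw [hv, ← LinearMap.comp_assoc, hu, hhw]
        have hvb : Function.Bijective v := by
          apply bij_of_one_sub_rad
          intro x
          apply hqk
          have := congrArg (fun t : (P₁ × P') →ₗ[A] ↥(moduleRadical A P₂) => t x) hqv
          simp only [LinearMap.coe_comp, Function.comp_apply] at this
          simp [mem_ker, map_sub, this]
        set V := LinearEquiv.ofBijective v hvb with hV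
        refine ⟨(LinearMap.fst A P₁ P') ∘ₗ (V.symm : (P₁ × P') →ₗ[A] (P₁ × P')) ∘ₗ u ∘ₗ
          (LinearMap.inl A P P'), ?_⟩
        ext x
        simp only [LinearMap.coe_comp, Function.comp_apply, inl_apply, LinearEquiv.coe_coe, fst_apply, id_apply]
        have h1 : u (f₁ x, (0 : P')) = v (x, 0) := by
          rw [hv]
          rfl
        have h2 : V.symm (v (x, (0 : P'))) = (x, 0) := by
          have : v (x, (0 : P')) = V (x, 0) := rfl
          rw [this, V.symm_apply_apply]
        rw [h1, h2]
end
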